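/- Every minor of the infinite Hankel matrix H = (W_{i+j}(q))_{i,j ≥ 0} of type B Narayana polynomials is a polynomial in q with nonnegative coefficients. Precisely: for every k ≥ 1 and all strictly increasing sequences of indices 0 ≤ i_1 < i_2 < ... < i_k and 0 ≤ j_1 < j_2 < ... < j_k, the determinant of the k × k matrix whose (s,t) entry is W_{i_s + j_t}(q) has all coefficients nonnegative. -/

import Mathlib

open Polynomial

/-- The `n`-th Narayana polynomial of type `B`:
`W_n(q) = ∑_{k=0}^{n} binom(n,k)^2 q^k`. -/
noncomputable def narayanaB (n : ℕ) : Polynomial ℝ :=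
  ∑ k ∈ Finset.range (n + 1), ((Nat.choose n k : Polynomial ℝ)) ^ 2 * Polynomial.X ^ k

open Polynomial Finset


/-- coefficientwise nonnegativity -/
def qnn (p : Polynomial ℝ) : Prop := ∀ m, 0 ≤ p.coeff m

lemma qnn_zero : qnn 0 := fun m => by simp
lemma qnn_one : qnn 1 := fun m => by
  rw [Polynomial.coeff_one]; positivity
lemma qnn_add {p q} (hp : qnn p) (hq : qnn q) : qnn (p + q) := fun m => by
  rw [Polynomial.coeff_add]; exact add_nonneg (hp m) (hq m)
lemma qnn_mul {p q} (hp : qnn p) (hq : qnn q) : qnn (p * q) := fun m => by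
  rw [Polynomial.coeff_mul]
  exact Finset.sum_nonneg fun x _ => mul_nonneg (hp x.1) (hq x.2)
lemma qnn_sum {α : Type*} (s : Finset α) (f : α → Polynomial ℝ)
    (h : ∀ a ∈ s, qnn (f a)) : qnn (∑ a ∈ s, f a) := by
  classical
  induction s using Finset.induction_on with
  | empty => simpa using qnn_zero
  | insert _ _ hx ih =>
      rw [Finset.sum_insert hx]
      exact qnn_add (h _ (Finset.mem_insert_self _ _))
        (ih fun a ha => h a (Finset.mem_insert_of_mem ha))
lemma qnn_prod {α : Type*} (s : Finset α) (f : α → Polynomial ℝ)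
    (h : ∀ a ∈ s, qnn (f a)) : qnn (∏ a ∈ s, f a) := by
  classical
  induction s using Finset.induction_on with
  | empty => simpa using qnn_one
  | insert _ _ hx ih =>
      rw [Finset.prod_insert hx]
      exact qnn_mul (h _ (Finset.mem_insert_self _ _))
        (ih fun a ha => h a (Finset.mem_insert_of_mem ha))
lemma qnn_X : qnn (X : Polynomial ℝ) := fun m => by
  rw [Polynomial.coeff_X]; positivity
lemma qnn_X_pow (n : ℕ) : qnn ((X : Polynomial ℝ) ^ n) := fun m => by
  rw [Polynomial.coeff_X_pow]; positivity
lemma qnn_C {r : ℝ} (hr : 0 ≤ r) : qnn (C r) := fun m => by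
  rw [Polynomial.coeff_C]; positivity

/-- the matrix `M`: `M i s = ∑_a C(i,a) C(i,a+s) q^a`. -/
noncomputable def Mm (i s : ℕ) : Polynomial ℝ :=
  ∑ a ∈ Finset.range (i + 1), Polynomial.monomial a ((i.choose a * i.choose (a + s) : ℕ) : ℝ)

lemma Mm_coeff (i s m : ℕ) : (Mm i s).coeff m = ((i.choose m * i.choose (m + s) : ℕ) : ℝ) := by
  rw [Mm, Polynomial.finset_sum_coeff]
  by_cases hm : m < i + 1
  · rw [Finset.sum_eq_single m]
    · simp
    · intro b _ hb; rw [Polynomial.coeff_monomial]; simp [hb]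
    · intro h; exact absurd (Finset.mem_range.2 hm) h
  · push_neg at hm
    have : i.choose m = 0 := Nat.choose_eq_zero_of_lt (by omega)
    rw [this]
    simp only [Nat.zero_mul, Nat.cast_zero]
    apply Finset.sum_eq_zero
    intro b hb
    rw [Polynomial.coeff_monomial, if_neg]
    have := Finset.mem_range.1 hb; omega

lemma qnn_Mm (i s : ℕ) : qnn (Mm i s) := fun m => by rw [Mm_coeff]; positivity

lemma Mm_eq_zero {i s : ℕ} (h : i < s) : Mm i s = 0 := by
  ext m
  have h2 : i.choose (m + s) = 0 := Nat.choose_eq_zero_of_lt (by omega)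
  rw [Mm_coeff, h2]
  simp

lemma Mm_zero (s : ℕ) : Mm 0 s = if s = 0 then 1 else 0 := by
  ext m
  rw [Mm_coeff]
  rcases Nat.eq_zero_or_pos s with hs | hs
  · subst hs
    rw [if_pos rfl, Polynomial.coeff_one]
    cases m with
    | zero => simp
    | succ n =>
        have : Nat.choose 0 (n+1) = 0 := Nat.choose_eq_zero_of_lt (by omega)
        simp [this]
  · rw [if_neg (by omega)]
    have : Nat.choose 0 (m + s) = 0 := Nat.choose_eq_zero_of_lt (by omega)
    rw [this]
    simp

/-- the tridiagonal production matrix `T`. -/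
noncomputable def Tm (u v : ℕ) : Polynomial ℝ :=
  (if u + 1 = v then 1 else 0) + (if u = v then 1 + X else 0)
    + (if u = v + 1 then (if v = 0 then 2 * X else X) else 0)

lemma qnn_Tm (u v : ℕ) : qnn (Tm u v) := by
  unfold Tm
  apply qnn_add; apply qnn_add
  · split <;> [exact qnn_one; exact qnn_zero]
  · split
    · exact qnn_add qnn_one qnn_X
    · exact qnn_zero
  · split
    · split
      · have h2 : (2 : Polynomial ℝ) = C 2 := by norm_cast
        rw [h2]; exact qnn_mul (qnn_C (by norm_num)) qnn_X
      · exact qnn_X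
    · exact qnn_zero

lemma Tm_lower_zero {u v : ℕ} (h : v + 2 ≤ u) : Tm u v = 0 := by
  unfold Tm; rw [if_neg (by omega), if_neg (by omega), if_neg (by omega)]; simp

lemma Tm_upper_zero {u v : ℕ} (h : u + 2 ≤ v) : Tm u v = 0 := by
  unfold Tm; rw [if_neg (by omega), if_neg (by omega), if_neg (by omega)]; simp

/-- diagonal weights -/
noncomputable def dm (s : ℕ) : Polynomial ℝ := if s = 0 then 1 else 2 * X ^ s

lemma qnn_dm (s : ℕ) : qnn (dm s) := by
  unfold dm
  split
  · exact qnn_one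
  · have h2 : (2 : Polynomial ℝ) = C 2 := by norm_cast
    rw [h2]; exact qnn_mul (qnn_C (by norm_num)) (qnn_X_pow s)

lemma pascal_mul (i a b : ℕ) :
    (i+1).choose (a+1) * (i+1).choose (b+1)
      = i.choose a * i.choose b + i.choose a * i.choose (b+1)
        + i.choose (a+1) * i.choose b + i.choose (a+1) * i.choose (b+1) := by
  rw [Nat.choose_succ_succ, Nat.choose_succ_succ]; ring

lemma coeff_two_mul (p : Polynomial ℝ) (m : ℕ) :
    ((2 : Polynomial ℝ) * p).coeff m = 2 * p.coeff m := by
  have h2 : (2 : Polynomial ℝ) = C 2 := by norm_cast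
  rw [h2, Polynomial.coeff_C_mul]

lemma rec0 (i : ℕ) : Mm (i+1) 0 = (1+X) * Mm i 0 + (2*X) * Mm i 1 := by
  ext m
  rw [Polynomial.coeff_add, add_mul, one_mul, Polynomial.coeff_add, mul_assoc]
  cases m with
  | zero =>
      rw [Mm_coeff, Mm_coeff, Polynomial.mul_coeff_zero, Polynomial.mul_coeff_zero,
        Polynomial.coeff_X_zero, Mm_coeff]
      simp
  | succ a =>
      rw [Polynomial.coeff_X_mul, coeff_two_mul, Polynomial.coeff_X_mul,
        Mm_coeff, Mm_coeff, Mm_coeff, Mm_coeff]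
      have h := pascal_mul i a a
      push_cast
      have h' : ((i+1).choose (a+1) : ℝ) * ((i+1).choose (a+1) : ℝ)
          = (i.choose a : ℝ) * (i.choose a) + (i.choose a : ℝ) * (i.choose (a+1))
            + (i.choose (a+1) : ℝ) * (i.choose a) + (i.choose (a+1) : ℝ) * (i.choose (a+1)) := by
        exact_mod_cast h
      rw [h']
      ring
  
lemma recS (i v : ℕ) :
    Mm (i+1) (v+1) = Mm i v + (1+X) * Mm i (v+1) + X * Mm i (v+2) := by
  ext m
  rw [Polynomial.coeff_add, Polynomial.coeff_add, add_mul, one_mul, Polynomial.coeff_add]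
  cases m with
  | zero =>
      rw [Mm_coeff, Mm_coeff, Mm_coeff, Polynomial.mul_coeff_zero, Polynomial.mul_coeff_zero,
        Polynomial.coeff_X_zero, Mm_coeff]
      simp only [Nat.zero_add]
      have hcs : (i+1).choose (v+1) = i.choose v + i.choose (v+1) := Nat.choose_succ_succ i v
      rw [hcs]
      push_cast
      simp only [Nat.choose_zero_right, Nat.cast_one, one_mul, mul_one]
      ring
  | succ a =>
      rw [Polynomial.coeff_X_mul, Polynomial.coeff_X_mul,
        Mm_coeff, Mm_coeff, Mm_coeff, Mm_coeff, Mm_coeff]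
      rw [show a + 1 + (v+1) = (a + (v+1)) + 1 from by omega]
      rw [show a + 1 + v = a + (v + 1) from by omega]
      rw [show a + (v + 2) = (a + (v+1)) + 1 from by omega]
      have h := pascal_mul i a (a + (v+1))
      push_cast
      have h' : ((i+1).choose (a+1) : ℝ) * ((i+1).choose ((a+(v+1))+1) : ℝ)
          = (i.choose a : ℝ) * (i.choose (a+(v+1)))
            + (i.choose a : ℝ) * (i.choose ((a+(v+1))+1))
            + (i.choose (a+1) : ℝ) * (i.choose (a+(v+1)))
            + (i.choose (a+1) : ℝ) * (i.choose ((a+(v+1))+1)) := by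
        exact_mod_cast h
      push_cast at h'
      rw [h']
      ring

lemma Tm_super (u : ℕ) : Tm u (u+1) = 1 := by
  unfold Tm; rw [if_pos rfl, if_neg (by omega), if_neg (by omega)]; simp

lemma Tm_diag (u : ℕ) : Tm u u = 1 + X := by
  unfold Tm; rw [if_neg (by omega), if_pos rfl, if_neg (by omega)]; simp

lemma Tm_sub (u : ℕ) : Tm (u+1) u = if u = 0 then 2*X else X := by
  unfold Tm; rw [if_neg (by omega), if_neg (by omega), if_pos rfl]; simp

lemma Tm_apart {u v : ℕ} (h1 : u ≠ v) (h2 : u ≠ v + 1) (h3 : v ≠ u + 1) : Tm u v = 0 := by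
  unfold Tm; rw [if_neg (by omega), if_neg (by omega), if_neg (by omega)]; simp

lemma Tm_col_zero (u : ℕ) :
    Tm u 0 = (if u = 0 then 1 + X else 0) + (if u = 1 then 2*X else 0) := by
  unfold Tm; split_ifs <;> first | contradiction | omega | ring

lemma Tm_col_succ (u w : ℕ) :
    Tm u (w+1) = (if u = w then 1 else 0) + (if u = w+1 then 1+X else 0)
      + (if u = w+2 then X else 0) := by
  unfold Tm; split_ifs <;> first | contradiction | omega | ring

lemma recMatrix (i v N : ℕ) (hN : i + 2 ≤ N) :
    Mm (i+1) v = ∑ u ∈ Finset.range N, Mm i u * Tm u v := by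
  have key : ∀ (w : ℕ) (x : Polynomial ℝ),
      (if w ∈ Finset.range N then Mm i w * x else 0) = Mm i w * x := by
    intro w x
    split
    · rfl
    · rename_i h
      rw [Finset.mem_range] at h
      rw [Mm_eq_zero (show i < w from by omega)]; simp
  cases v with
  | zero =>
      rw [show (∑ u ∈ Finset.range N, Mm i u * Tm u 0)
          = ∑ u ∈ Finset.range N, ((if u = 0 then Mm i u * (1+X) else 0)
              + (if u = 1 then Mm i u * (2*X) else 0)) from
        Finset.sum_congr rfl fun u _ => by
          rw [Tm_col_zero, mul_add, mul_ite, mul_ite, mul_zero]]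
      rw [Finset.sum_add_distrib,
        Finset.sum_ite_eq' (Finset.range N) 0 (fun u => Mm i u * (1+X)),
        Finset.sum_ite_eq' (Finset.range N) 1 (fun u => Mm i u * (2*X)),
        key, key, rec0]
      ring
  | succ w =>
      rw [show (∑ u ∈ Finset.range N, Mm i u * Tm u (w+1))
          = ∑ u ∈ Finset.range N, ((if u = w then Mm i u * 1 else 0)
              + (if u = w+1 then Mm i u * (1+X) else 0) + (if u = w+2 then Mm i u * X else 0)) from
        Finset.sum_congr rfl fun u _ => by
          rw [Tm_col_succ, mul_add, mul_add, mul_ite, mul_ite, mul_ite, mul_zero]]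
      rw [Finset.sum_add_distrib, Finset.sum_add_distrib,
        Finset.sum_ite_eq' (Finset.range N) w (fun u => Mm i u * 1),
        Finset.sum_ite_eq' (Finset.range N) (w+1) (fun u => Mm i u * (1+X)),
        Finset.sum_ite_eq' (Finset.range N) (w+2) (fun u => Mm i u * X),
        key, key, key, recS]
      ring

lemma dT_symm (u v : ℕ) : dm u * Tm v u = dm v * Tm u v := by
  by_cases h1 : v = u
  · subst h1; ring
  by_cases h2 : v = u + 1
  · subst h2
    rw [Tm_sub, Tm_super]
    unfold dm
    cases u with
    | zero => simp; try ring
    | succ w =>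
        rw [if_neg (by omega), if_neg (by omega), if_neg (by omega)]
        ring
  by_cases h3 : u = v + 1
  · subst h3
    rw [Tm_sub, Tm_super]
    unfold dm
    cases v with
    | zero => simp; try ring
    | succ w =>
        rw [if_neg (by omega), if_neg (by omega), if_neg (by omega)]
        ring
  · rw [Tm_apart (by omega) (by omega) (by omega), Tm_apart (by omega) (by omega) (by omega)]
    ring

lemma narayanaB_coeff (n m : ℕ) : (narayanaB n).coeff m = (((n.choose m)^2 : ℕ) : ℝ) := by
  have hrw : ∀ k : ℕ, ((n.choose k : Polynomial ℝ))^2 * X^k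
      = Polynomial.monomial k (((n.choose k)^2 : ℕ) : ℝ) := by
    intro k
    rw [← Polynomial.C_eq_natCast, ← Polynomial.C_pow, Polynomial.C_mul_X_pow_eq_monomial]
    push_cast; ring_nf
  rw [narayanaB]
  simp_rw [hrw]
  rw [Polynomial.finset_sum_coeff]
  by_cases hm : m < n + 1
  · rw [Finset.sum_eq_single m]
    · simp
    · intro b _ hb; rw [Polynomial.coeff_monomial]; simp [hb]
    · intro h; exact absurd (Finset.mem_range.2 hm) h
  · push_neg at hm
    have h0 : n.choose m = 0 := Nat.choose_eq_zero_of_lt (by omega)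
    rw [Finset.sum_eq_zero]
    · rw [h0]; norm_num
    · intro b hb
      rw [Polynomial.coeff_monomial, if_neg]
      have := Finset.mem_range.1 hb; omega

lemma narayanaB_eq_Mm0 (n : ℕ) : narayanaB n = Mm n 0 := by
  ext m
  rw [narayanaB_coeff, Mm_coeff]
  push_cast
  ring

lemma SS_ext (i j N N' : ℕ) (h : i + 1 ≤ N) (h' : i + 1 ≤ N') :
    ∑ u ∈ Finset.range N, dm u * Mm i u * Mm j u
      = ∑ u ∈ Finset.range N', dm u * Mm i u * Mm j u := by
  wlog hle : N ≤ N' generalizing N N'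
  · exact (this N' N h' h (by omega)).symm
  apply Finset.sum_subset
  · exact Finset.range_subset_range.2 hle
  · intro u _ hu
    rw [Finset.mem_range] at hu
    rw [Mm_eq_zero (i := i) (show i < u from by omega)]
    ring

lemma keyAux : ∀ i j : ℕ,
    narayanaB (i + j) = ∑ u ∈ Finset.range (i+j+2), dm u * Mm i u * Mm j u := by
  intro i
  induction i with
  | zero =>
      intro j
      rw [Finset.sum_eq_single 0]
      · rw [show (0:ℕ) + j = j from by omega, narayanaB_eq_Mm0, Mm_zero]
        unfold dm
        simp
      · intro u _ hu
        rw [Mm_zero, if_neg hu]; ring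
      · intro h; exact absurd (Finset.mem_range.2 (by omega)) h
  | succ i ih =>
      intro j
      have e0 : i + 1 + j = i + (j + 1) := by omega
      rw [e0, ih (j+1)]
      have eN : i + (j+1) + 2 = (i+1) + j + 2 := by omega
      rw [eN]
      set N := (i+1)+j+2 with hNdef
      have hswap : ∀ v, (∑ u ∈ Finset.range N, dm v * (Mm i u * Tm u v) * Mm j v)
          = dm v * Mm (i+1) v * Mm j v := by
        intro v
        rw [recMatrix i v N (by omega), Finset.mul_sum, Finset.sum_mul]
      calc ∑ u ∈ Finset.range N, dm u * Mm i u * Mm (j+1) u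
          = ∑ u ∈ Finset.range N, ∑ v ∈ Finset.range N, dm u * Mm i u * (Mm j v * Tm v u) := by
            apply Finset.sum_congr rfl; intro u _
            rw [recMatrix j u N (by omega), Finset.mul_sum]
        _ = ∑ v ∈ Finset.range N, ∑ u ∈ Finset.range N, dm v * (Mm i u * Tm u v) * Mm j v := by
            rw [Finset.sum_comm]
            apply Finset.sum_congr rfl; intro v _
            apply Finset.sum_congr rfl; intro u _
            calc dm u * Mm i u * (Mm j v * Tm v u)
                = (dm u * Tm v u) * Mm i u * Mm j v := by ring
              _ = (dm v * Tm u v) * Mm i u * Mm j v := by rw [dT_symm]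
              _ = dm v * (Mm i u * Tm u v) * Mm j v := by ring
        _ = ∑ v ∈ Finset.range N, dm v * Mm (i+1) v * Mm j v := by
            apply Finset.sum_congr rfl; intro v _
            exact hswap v

lemma keyId (i j N : ℕ) (h : i + 1 ≤ N) :
    narayanaB (i + j) = ∑ u ∈ Finset.range N, dm u * Mm i u * Mm j u := by
  rw [keyAux i j]
  exact SS_ext i j (i+j+2) N (by omega) h

section CauchyBinet

open Equiv Equiv.Perm Finset Matrix

lemma cb_aux {k N : ℕ} (A : Fin k → Fin N → Polynomial ℝ) (B : Fin N → Fin k → Polynomial ℝ)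
    {p : Fin k → Fin N} (H : ¬Function.Injective p) :
    (∑ σ : Equiv.Perm (Fin k),
      ((Equiv.Perm.sign σ : ℤ) : Polynomial ℝ) * ∏ x, A (σ x) (p x) * B (p x) x) = 0 := by
  obtain ⟨i, j, hpij, hij⟩ : ∃ i j, p i = p j ∧ i ≠ j := by
    rw [Function.Injective] at H; push_neg at H
    obtain ⟨i, j, h1, h2⟩ := H; exact ⟨i, j, h1, h2⟩
  exact Finset.sum_involution (fun σ _ => σ * Equiv.swap i j)
    (fun σ _ => by
      have h1 : (∏ x, A (σ x) (p x)) = ∏ x, A ((σ * Equiv.swap i j) x) (p x) :=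
        Fintype.prod_equiv (Equiv.swap i j) _ _ (by simp [Equiv.apply_swap_eq_self hpij])
      simp [h1, Equiv.Perm.sign_swap hij, -Equiv.Perm.sign_swap', Finset.prod_mul_distrib])
    (fun σ _ _ => (not_congr Equiv.mul_swap_eq_iff).mpr hij) (fun _ _ => Finset.mem_univ _)
    fun σ _ => Equiv.mul_swap_involutive i j σ

open scoped Classical in
lemma cauchy_binet {k N : ℕ} (A : Fin k → Fin N → Polynomial ℝ)
    (B : Fin N → Fin k → Polynomial ℝ) :
    Matrix.det (Matrix.of fun s t : Fin k => ∑ u : Fin N, A s u * B u t)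
      = ∑ g ∈ Finset.univ.filter (fun g : Fin k → Fin N => StrictMono g),
          Matrix.det (Matrix.of fun s t : Fin k => A s (g t))
            * Matrix.det (Matrix.of fun s t : Fin k => B (g s) t) := by
  have hD : ∀ g : Fin k → Fin N,
      (∑ τ : Equiv.Perm (Fin k), ∑ σ : Equiv.Perm (Fin k),
        ((Equiv.Perm.sign σ : ℤ) : Polynomial ℝ) * ∏ x, A (σ x) (g (τ x)) * B (g (τ x)) x)
      = Matrix.det (Matrix.of fun s t : Fin k => A s (g t))
          * Matrix.det (Matrix.of fun s t : Fin k => B (g s) t) := by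
    intro g
    rw [← Matrix.det_mul]
    symm
    calc Matrix.det ((Matrix.of fun s t : Fin k => A s (g t))
            * (Matrix.of fun s t : Fin k => B (g s) t))
        = ∑ p : Fin k → Fin k, ∑ σ : Equiv.Perm (Fin k),
            ((Equiv.Perm.sign σ : ℤ) : Polynomial ℝ)
              * ∏ x, A (σ x) (g (p x)) * B (g (p x)) x := by
          simp only [Matrix.det_apply', Matrix.mul_apply, Matrix.of_apply,
            Finset.prod_univ_sum, Finset.mul_sum, Fintype.piFinset_univ]
          rw [Finset.sum_comm]
      _ = ∑ p ∈ Finset.univ.filter (fun p : Fin k → Fin k => Function.Bijective p),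
            ∑ σ : Equiv.Perm (Fin k),
            ((Equiv.Perm.sign σ : ℤ) : Polynomial ℝ)
              * ∏ x, A (σ x) (g (p x)) * B (g (p x)) x := by
          refine (Finset.sum_subset (Finset.filter_subset _ _) fun f _ hbij => ?_).symm
          have hnb : ¬Function.Bijective f := by simpa using hbij
          exact Matrix.det_mul_aux (M := Matrix.of fun s t : Fin k => A s (g t))
            (N := Matrix.of fun s t : Fin k => B (g s) t) hnb
      _ = ∑ τ : Equiv.Perm (Fin k), ∑ σ : Equiv.Perm (Fin k),
            ((Equiv.Perm.sign σ : ℤ) : Polynomial ℝ)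
              * ∏ x, A (σ x) (g (τ x)) * B (g (τ x)) x := by
          exact Finset.sum_bij (fun p h => Equiv.ofBijective p (Finset.mem_filter.1 h).2)
            (fun _ _ => Finset.mem_univ _)
            (fun _ _ _ _ h => by injection h)
            (fun b _ => ⟨b, Finset.mem_filter.2 ⟨Finset.mem_univ _, b.bijective⟩,
              Equiv.coe_fn_injective rfl⟩)
            (fun _ _ => rfl)
  calc Matrix.det (Matrix.of fun s t : Fin k => ∑ u : Fin N, A s u * B u t)
      = ∑ p : Fin k → Fin N, ∑ σ : Equiv.Perm (Fin k),
          ((Equiv.Perm.sign σ : ℤ) : Polynomial ℝ) * ∏ x, A (σ x) (p x) * B (p x) x := by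
        simp only [Matrix.det_apply', Matrix.of_apply, Finset.prod_univ_sum, Finset.mul_sum,
          Fintype.piFinset_univ]
        rw [Finset.sum_comm]
    _ = ∑ p ∈ Finset.univ.filter (fun p : Fin k → Fin N => Function.Injective p),
          ∑ σ : Equiv.Perm (Fin k),
          ((Equiv.Perm.sign σ : ℤ) : Polynomial ℝ) * ∏ x, A (σ x) (p x) * B (p x) x := by
        refine (Finset.sum_subset (Finset.filter_subset _ _) fun f _ hinj => ?_).symm
        exact cb_aux A B (by simpa using hinj)
    _ = ∑ x ∈ (Finset.univ.filter (fun g : Fin k → Fin N => StrictMono g))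
          ×ˢ (Finset.univ : Finset (Equiv.Perm (Fin k))),
          ∑ σ : Equiv.Perm (Fin k),
          ((Equiv.Perm.sign σ : ℤ) : Polynomial ℝ)
            * ∏ y, A (σ y) ((x.1 ∘ x.2) y) * B ((x.1 ∘ x.2) y) y := by
        refine Finset.sum_nbij' (i := fun p => (p ∘ Tuple.sort p, (Tuple.sort p)⁻¹))
          (j := fun x => x.1 ∘ x.2) ?_ ?_ ?_ ?_ ?_
        · intro p hp
          have hinj : Function.Injective p := by simpa using (Finset.mem_filter.1 hp).2
          refine Finset.mem_product.2 ⟨Finset.mem_filter.2 ⟨Finset.mem_univ _, ?_⟩,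
            Finset.mem_univ _⟩
          exact (Tuple.monotone_sort p).strictMono_of_injective
            (hinj.comp (Tuple.sort p).injective)
        · intro x hx
          have hsm : StrictMono x.1 := by
            simpa using (Finset.mem_filter.1 (Finset.mem_product.1 hx).1).2
          exact Finset.mem_filter.2 ⟨Finset.mem_univ _, hsm.injective.comp x.2.injective⟩
        · intro p hp
          show (p ∘ ⇑(Tuple.sort p)) ∘ ⇑((Tuple.sort p)⁻¹) = p
          funext y
          simp
        · intro x hx
          have hsm : StrictMono x.1 := by
            simpa using (Finset.mem_filter.1 (Finset.mem_product.1 hx).1).2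
          have hinj : Function.Injective (x.1 ∘ ⇑x.2) := hsm.injective.comp x.2.injective
          have hmono1 : Monotone ((x.1 ∘ ⇑x.2) ∘ ⇑(Tuple.sort (x.1 ∘ ⇑x.2))) :=
            Tuple.monotone_sort _
          have hcomp : (x.1 ∘ ⇑x.2) ∘ ⇑(x.2⁻¹) = x.1 := by
            funext y; simp
          have hmono2 : Monotone ((x.1 ∘ ⇑x.2) ∘ ⇑(x.2⁻¹)) := by
            rw [hcomp]; exact hsm.monotone
          have hkey : (x.1 ∘ ⇑x.2) ∘ ⇑(Tuple.sort (x.1 ∘ ⇑x.2)) = (x.1 ∘ ⇑x.2) ∘ ⇑(x.2⁻¹) :=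
            Tuple.unique_monotone hmono1 hmono2
          have hperm : Tuple.sort (x.1 ∘ ⇑x.2) = x.2⁻¹ := by
            ext y
            exact congrArg Fin.val (hinj (congrFun hkey y))
          show ((x.1 ∘ ⇑x.2) ∘ ⇑(Tuple.sort (x.1 ∘ ⇑x.2)), (Tuple.sort (x.1 ∘ ⇑x.2))⁻¹) = x
          refine Prod.ext ?_ ?_
          · show (x.1 ∘ ⇑x.2) ∘ ⇑(Tuple.sort (x.1 ∘ ⇑x.2)) = x.1
            rw [hkey, hcomp]
          · show (Tuple.sort (x.1 ∘ ⇑x.2))⁻¹ = x.2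
            rw [hperm]
            exact inv_inv x.2
        · intro p hp
          simp only [Function.comp_apply, Equiv.Perm.inv_def, Equiv.apply_symm_apply]
    _ = ∑ g ∈ Finset.univ.filter (fun g : Fin k → Fin N => StrictMono g),
          Matrix.det (Matrix.of fun s t : Fin k => A s (g t))
            * Matrix.det (Matrix.of fun s t : Fin k => B (g s) t) := by
        rw [Finset.sum_product]
        apply Finset.sum_congr rfl
        intro g _
        exact hD g

end CauchyBinet
section Blocks

open Matrix Finset

lemma det_zero_block_lower {k : ℕ} (A : Matrix (Fin k) (Fin k) (Polynomial ℝ)) (s : Fin k)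
    (h : ∀ s' t : Fin k, s ≤ s' → t ≤ s → A s' t = 0) : A.det = 0 := by
  rw [Matrix.det_apply]
  apply Finset.sum_eq_zero
  intro σ _
  have hex : ∃ i : Fin k, i ≤ s ∧ s ≤ σ i := by
    by_contra hcon
    push_neg at hcon
    set S := Finset.univ.filter (fun i : Fin k => i ≤ s) with hS
    set T := Finset.univ.filter (fun j : Fin k => j < s) with hT
    have hmaps : ∀ i ∈ S, σ i ∈ T := by
      intro i hi
      rw [hS, Finset.mem_filter] at hi
      rw [hT, Finset.mem_filter]
      exact ⟨Finset.mem_univ _, hcon i hi.2⟩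
    have hinj : Set.InjOn σ S := fun x _ y _ hxy => σ.injective hxy
    have hcard := Finset.card_le_card_of_injOn σ hmaps hinj
    have hss : T ⊂ S := by
      constructor
      · intro x hx
        rw [hT, Finset.mem_filter] at hx
        rw [hS, Finset.mem_filter]
        exact ⟨Finset.mem_univ _, le_of_lt hx.2⟩
      · intro hsub
        have h1 : s ∈ S := by rw [hS, Finset.mem_filter]; exact ⟨Finset.mem_univ _, le_refl _⟩
        have h2 := hsub h1
        rw [hT, Finset.mem_filter] at h2
        exact absurd h2.2 (lt_irrefl s)
    exact absurd hcard (not_le.2 (Finset.card_lt_card hss))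
  obtain ⟨i, h1, h2⟩ := hex
  have hp : (∏ i : Fin k, A (σ i) i) = 0 :=
    Finset.prod_eq_zero (Finset.mem_univ i) (h (σ i) i h2 h1)
  rw [hp]
  simp

lemma det_zero_block_upper {k : ℕ} (A : Matrix (Fin k) (Fin k) (Polynomial ℝ)) (s : Fin k)
    (h : ∀ s' t : Fin k, s' ≤ s → s ≤ t → A s' t = 0) : A.det = 0 := by
  rw [← Matrix.det_transpose]
  exact det_zero_block_lower A.transpose s (fun s' t hs ht => h t s' ht hs)

lemma det_split_lower (a b : ℕ) (A : Matrix (Fin (a+b)) (Fin (a+b)) (Polynomial ℝ))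
    (h : ∀ (s : Fin b) (t : Fin a), A (Fin.natAdd a s) (Fin.castAdd b t) = 0) :
    A.det = (Matrix.of fun s t : Fin a => A (Fin.castAdd b s) (Fin.castAdd b t)).det
      * (Matrix.of fun s t : Fin b => A (Fin.natAdd a s) (Fin.natAdd a t)).det := by
  rw [← Matrix.det_submatrix_equiv_self finSumFinEquiv A]
  have he : A.submatrix finSumFinEquiv finSumFinEquiv
      = Matrix.fromBlocks
          (Matrix.of fun s t : Fin a => A (Fin.castAdd b s) (Fin.castAdd b t))
          (Matrix.of fun s t => A (Fin.castAdd b s) (Fin.natAdd a t))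
          0
          (Matrix.of fun s t : Fin b => A (Fin.natAdd a s) (Fin.natAdd a t)) := by
    ext i j
    cases i <;> cases j <;>
      simp [Matrix.fromBlocks, finSumFinEquiv_apply_left, finSumFinEquiv_apply_right, h]
  rw [he, Matrix.det_fromBlocks_zero₂₁]

lemma det_split_upper (a b : ℕ) (A : Matrix (Fin (a+b)) (Fin (a+b)) (Polynomial ℝ))
    (h : ∀ (s : Fin a) (t : Fin b), A (Fin.castAdd b s) (Fin.natAdd a t) = 0) :
    A.det = (Matrix.of fun s t : Fin a => A (Fin.castAdd b s) (Fin.castAdd b t)).det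
      * (Matrix.of fun s t : Fin b => A (Fin.natAdd a s) (Fin.natAdd a t)).det := by
  have h2 := det_split_lower a b A.transpose (fun s t => h t s)
  rw [Matrix.det_transpose] at h2
  rw [h2]
  have e1 : (Matrix.of fun s t : Fin a => A.transpose (Fin.castAdd b s) (Fin.castAdd b t))
      = (Matrix.of fun s t : Fin a => A (Fin.castAdd b s) (Fin.castAdd b t)).transpose := rfl
  have e2 : (Matrix.of fun s t : Fin b => A.transpose (Fin.natAdd a s) (Fin.natAdd a t))
      = (Matrix.of fun s t : Fin b => A (Fin.natAdd a s) (Fin.natAdd a t)).transpose := rfl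
  rw [e1, e2, Matrix.det_transpose, Matrix.det_transpose]

end Blocks

section BkSection

open Matrix Finset

noncomputable def Bk (a n : ℕ) : Matrix (Fin n) (Fin n) (Polynomial ℝ) :=
  Matrix.of fun s t => Tm (a + s) (a + t)

noncomputable def G (m : ℕ) : Polynomial ℝ := ∑ t ∈ Finset.range m, X^t

lemma X_mul_G (m : ℕ) : X * G m = G (m+1) - 1 := by
  unfold G
  rw [Finset.mul_sum, Finset.sum_range_succ']
  simp [pow_succ, mul_comm]

lemma Bk_rec (a n : ℕ) :
    (Bk a (n+2)).det
      = (1+X) * (Bk (a+1) (n+1)).det - (if a = 0 then 2*X else X) * (Bk (a+2) n).det := by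
  rw [Matrix.det_succ_row_zero]
  rw [Fin.sum_univ_succ, Fin.sum_univ_succ]
  have hz : (∑ j : Fin n, (-1:Polynomial ℝ)^((j.succ.succ : Fin (n+2)) : ℕ)
      * Bk a (n+2) 0 j.succ.succ
      * ((Bk a (n+2)).submatrix Fin.succ j.succ.succ.succAbove).det) = 0 := by
    apply Finset.sum_eq_zero
    intro j _
    have : Bk a (n+2) 0 j.succ.succ = 0 := by
      show Tm (a + ((0 : Fin (n+2)) : ℕ)) (a + ((j.succ.succ : Fin (n+2)) : ℕ)) = 0
      apply Tm_upper_zero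
      simp only [Fin.val_succ, Fin.val_zero]
      omega
    rw [this]
    ring
  rw [hz, add_zero]
  have h00 : Bk a (n+2) 0 0 = 1 + X := by
    show Tm (a + ((0 : Fin (n+2)) : ℕ)) (a + ((0 : Fin (n+2)) : ℕ)) = 1 + X
    simp [Tm_diag]
  have h01 : Bk a (n+2) 0 ((0 : Fin (n+1)).succ) = 1 := by
    show Tm (a + ((0 : Fin (n+2)) : ℕ)) (a + (((0 : Fin (n+1)).succ : Fin (n+2)) : ℕ)) = 1
    have hv : (((0 : Fin (n+1)).succ : Fin (n+2)) : ℕ) = 1 := rfl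
    rw [hv]
    simp [Tm_super]
  have hsub0 : (Bk a (n+2)).submatrix Fin.succ ((0 : Fin (n+2)).succAbove) = Bk (a+1) (n+1) := by
    funext s t
    show Tm (a + (s.succ : ℕ)) (a + (((0 : Fin (n+2)).succAbove t) : ℕ)) = Tm (a+1+s) (a+1+t)
    rw [Fin.succAbove_zero]
    simp only [Fin.val_succ]
    congr 1 <;> omega
  -- second term: expand along first column
  have hsub1 : ((Bk a (n+2)).submatrix Fin.succ (((0 : Fin (n+1)).succ : Fin (n+2)).succAbove)).det
      = (if a = 0 then 2*X else X) * (Bk (a+2) n).det := by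
    rw [Matrix.det_succ_column_zero, Fin.sum_univ_succ]
    have hz2 : (∑ s : Fin n, (-1:Polynomial ℝ)^((s.succ : Fin (n+1)) : ℕ)
        * ((Bk a (n+2)).submatrix Fin.succ (((0 : Fin (n+1)).succ : Fin (n+2)).succAbove)) s.succ 0
        * (((Bk a (n+2)).submatrix Fin.succ (((0 : Fin (n+1)).succ : Fin (n+2)).succAbove)).submatrix
            s.succ.succAbove Fin.succ).det) = 0 := by
      apply Finset.sum_eq_zero
      intro s _
      have : ((Bk a (n+2)).submatrix Fin.succ (((0 : Fin (n+1)).succ : Fin (n+2)).succAbove)) s.succ 0 = 0 := by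
        show Tm (a + (s.succ.succ : ℕ)) (a + ((((0 : Fin (n+1)).succ : Fin (n+2)).succAbove 0) : ℕ)) = 0
        have h0 : (((0 : Fin (n+1)).succ : Fin (n+2)).succAbove 0) = 0 := rfl
        rw [h0]
        apply Tm_lower_zero
        simp only [Fin.val_succ, Fin.val_zero]
        omega
      rw [this]
      ring
    rw [hz2, add_zero]
    have hent : ((Bk a (n+2)).submatrix Fin.succ (((0 : Fin (n+1)).succ : Fin (n+2)).succAbove)) 0 0
        = (if a = 0 then 2*X else X) := by
      show Tm (a + ((0 : Fin (n+1)).succ : ℕ)) (a + ((((0 : Fin (n+1)).succ : Fin (n+2)).succAbove 0) : ℕ))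
        = (if a = 0 then 2*X else X)
      have h0 : (((0 : Fin (n+1)).succ : Fin (n+2)).succAbove 0) = 0 := rfl
      rw [h0]
      have h1 : (((0 : Fin (n+1)).succ : Fin (n+2)) : ℕ) = 1 := rfl
      rw [h1]
      show Tm (a + 1) (a + 0) = _
      rw [show a + 0 = a from by omega, Tm_sub]
    have hsub2 : ((Bk a (n+2)).submatrix Fin.succ (((0 : Fin (n+1)).succ : Fin (n+2)).succAbove)).submatrix
        (Fin.succAbove 0) Fin.succ = Bk (a+2) n := by
      funext s t
      show Tm (a + ((Fin.succAbove 0 s).succ : ℕ)) (a + ((((0 : Fin (n+1)).succ : Fin (n+2)).succAbove t.succ) : ℕ))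
        = Tm (a+2+s) (a+2+t)
      rw [Fin.succAbove_zero]
      have ht : (((0 : Fin (n+1)).succ : Fin (n+2)).succAbove t.succ) = t.succ.succ := by
        apply Fin.succAbove_of_le_castSucc
        rw [Fin.le_castSucc_iff]
        simp [Fin.lt_iff_val_lt_val, Fin.val_succ]
      rw [ht]
      simp only [Fin.val_succ]
      congr 1 <;> omega
    rw [hent, hsub2]
    simp
  rw [h00, h01, hsub0, hsub1]
  have hv1 : ((((0 : Fin (n+1)).succ : Fin (n+2))) : ℕ) = 1 := rfl
  have hv0 : (((0 : Fin (n+2))) : ℕ) = 0 := rfl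
  rw [hv1, hv0]
  ring

end BkSection
section BkVal

open Matrix Finset

lemma detBk_pos : ∀ n a : ℕ, (Bk (a+1) n).det = G (n+1) := by
  intro n
  induction n using Nat.strong_induction_on with
  | _ n IH =>
    rcases n with _ | _ | m
    · intro a
      rw [Matrix.det_fin_zero]
      unfold G
      simp
    · intro a
      rw [Matrix.det_fin_one]
      show Tm (a+1+((0 : Fin 1):ℕ)) (a+1+((0 : Fin 1):ℕ)) = G 2
      simp only [Fin.val_zero, Nat.add_zero]
      rw [Tm_diag]
      unfold G
      rw [Finset.sum_range_succ, Finset.sum_range_one]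
      simp
    · intro a
      rw [Bk_rec (a+1) m, if_neg (by omega)]
      rw [IH (m+1) (by omega) (a+1)]
      rw [show a+1+2 = (a+2)+1 from by omega]
      rw [IH m (by omega) (a+2)]
      have h1 := X_mul_G (m+2)
      have h2 := X_mul_G (m+1)
      linear_combination h1 - h2

lemma detBk_zero (n : ℕ) : (Bk 0 (n+1)).det = 1 + X^(n+1) := by
  rcases n with _ | m
  · rw [Matrix.det_fin_one]
    show Tm (0+((0 : Fin 1):ℕ)) (0+((0 : Fin 1):ℕ)) = 1 + X^1
    simp only [Fin.val_zero, Nat.add_zero]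
    rw [Tm_diag, pow_one]
  · rw [Bk_rec 0 m, if_pos rfl]
    rw [detBk_pos (m+1) 0]
    rw [show (0:ℕ)+2 = 1+1 from rfl]
    rw [detBk_pos m 1]
    have h1 := X_mul_G (m+2)
    have h2 := X_mul_G (m+1)
    have h3 : G (m+3) = G (m+2) + X^(m+2) := Finset.sum_range_succ _ _
    linear_combination h1 - 2*h2 + h3

lemma qnn_G (m : ℕ) : qnn (G m) := by
  unfold G
  exact qnn_sum _ _ (fun t _ => qnn_X_pow t)

lemma qnn_detBk (a n : ℕ) : qnn ((Bk a n).det) := by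
  cases a with
  | zero =>
      cases n with
      | zero => rw [Matrix.det_fin_zero]; exact qnn_one
      | succ m => rw [detBk_zero m]; exact qnn_add qnn_one (qnn_X_pow (m+1))
  | succ b => rw [detBk_pos n b]; exact qnn_G (n+1)

end BkVal
section Ttn

open Matrix Finset

theorem Ttn : ∀ k : ℕ, ∀ r c : Fin k → ℕ, StrictMono r → StrictMono c →
    qnn (Matrix.det (Matrix.of fun s t : Fin k => Tm (r s) (c t))) := by
  intro k
  induction k using Nat.strong_induction_on with
  | _ k IH =>
  intro r c hr hc
  rcases Nat.eq_zero_or_pos k with rfl | hk0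
  · rw [Matrix.det_fin_zero]; exact qnn_one
  by_cases hA : ∃ s : Fin k, c s + 2 ≤ r s
  · obtain ⟨s, hs⟩ := hA
    have hz : (Matrix.of fun s t : Fin k => Tm (r s) (c t)).det = 0 := by
      apply det_zero_block_lower _ s
      intro s' t hs' ht
      show Tm (r s') (c t) = 0
      have h1 : r s ≤ r s' := hr.monotone hs'
      have h2 : c t ≤ c s := hc.monotone ht
      exact Tm_lower_zero (by omega)
    rw [hz]; exact qnn_zero
  by_cases hB : ∃ s : Fin k, r s + 2 ≤ c s
  · obtain ⟨s, hs⟩ := hB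
    have hz : (Matrix.of fun s t : Fin k => Tm (r s) (c t)).det = 0 := by
      apply det_zero_block_upper _ s
      intro s' t hs' ht
      show Tm (r s') (c t) = 0
      have h1 : r s' ≤ r s := hr.monotone hs'
      have h2 : c s ≤ c t := hc.monotone ht
      exact Tm_upper_zero (by omega)
    rw [hz]; exact qnn_zero
  push_neg at hA hB
  by_cases hC : ∃ p q : Fin k, (q:ℕ) + 1 = (p:ℕ) ∧ c q + 2 ≤ r p
  · obtain ⟨p, q, hpq, hgap⟩ := hC
    have hb : 0 < k - (p:ℕ) := by omega
    have hk : (p:ℕ) + (k - (p:ℕ)) = k := by omega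
    set a := (p:ℕ) with hadef
    set b := k - (p:ℕ) with hbdef
    let e : Fin (a+b) ≃ Fin k := finCongr hk
    have hval1 : ∀ x : Fin a, ((e (Fin.castAdd b x)) : ℕ) = (x:ℕ) := by
      intro x; simp [e]
    have hval2 : ∀ x : Fin b, ((e (Fin.natAdd a x)) : ℕ) = a + (x:ℕ) := by
      intro x; simp [e]
    have hdet : (Matrix.of fun s t : Fin k => Tm (r s) (c t)).det
        = ((Matrix.of fun s t : Fin k => Tm (r s) (c t)).submatrix e e).det :=
      (Matrix.det_submatrix_equiv_self e _).symm
    rw [hdet]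
    rw [det_split_lower a b _ (by
      intro s t
      show Tm (r (e (Fin.natAdd a s))) (c (e (Fin.castAdd b t))) = 0
      have h1 : r p ≤ r (e (Fin.natAdd a s)) := by
        apply hr.monotone
        rw [Fin.le_def, hval2]
        omega
      have h2 : c (e (Fin.castAdd b t)) ≤ c q := by
        apply hc.monotone
        rw [Fin.le_def, hval1]
        omega
      exact Tm_lower_zero (by omega))]
    apply qnn_mul
    · exact IH a (by omega) (fun s => r (e (Fin.castAdd b s))) (fun t => c (e (Fin.castAdd b t)))
        (fun x y hxy => hr (by rw [Fin.lt_def, hval1, hval1]; exact Fin.lt_def.mp hxy))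
        (fun x y hxy => hc (by rw [Fin.lt_def, hval1, hval1]; exact Fin.lt_def.mp hxy))
    · exact IH b (by omega) (fun s => r (e (Fin.natAdd a s))) (fun t => c (e (Fin.natAdd a t)))
        (fun x y hxy => hr (by rw [Fin.lt_def, hval2, hval2]
                               exact Nat.add_lt_add_left (Fin.lt_def.mp hxy) a))
        (fun x y hxy => hc (by rw [Fin.lt_def, hval2, hval2]
                               exact Nat.add_lt_add_left (Fin.lt_def.mp hxy) a))
  by_cases hD : ∃ p q : Fin k, (q:ℕ) + 1 = (p:ℕ) ∧ r q + 2 ≤ c p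
  · obtain ⟨p, q, hpq, hgap⟩ := hD
    have hb : 0 < k - (p:ℕ) := by omega
    have hk : (p:ℕ) + (k - (p:ℕ)) = k := by omega
    set a := (p:ℕ) with hadef
    set b := k - (p:ℕ) with hbdef
    let e : Fin (a+b) ≃ Fin k := finCongr hk
    have hval1 : ∀ x : Fin a, ((e (Fin.castAdd b x)) : ℕ) = (x:ℕ) := by
      intro x; simp [e]
    have hval2 : ∀ x : Fin b, ((e (Fin.natAdd a x)) : ℕ) = a + (x:ℕ) := by
      intro x; simp [e]
    have hdet : (Matrix.of fun s t : Fin k => Tm (r s) (c t)).det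
        = ((Matrix.of fun s t : Fin k => Tm (r s) (c t)).submatrix e e).det :=
      (Matrix.det_submatrix_equiv_self e _).symm
    rw [hdet]
    rw [det_split_upper a b _ (by
      intro s t
      show Tm (r (e (Fin.castAdd b s))) (c (e (Fin.natAdd a t))) = 0
      have h1 : r (e (Fin.castAdd b s)) ≤ r q := by
        apply hr.monotone
        rw [Fin.le_def, hval1]
        omega
      have h2 : c p ≤ c (e (Fin.natAdd a t)) := by
        apply hc.monotone
        rw [Fin.le_def, hval2]
        omega
      exact Tm_upper_zero (by omega))]
    apply qnn_mul
    · exact IH a (by omega) (fun s => r (e (Fin.castAdd b s))) (fun t => c (e (Fin.castAdd b t)))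
        (fun x y hxy => hr (by rw [Fin.lt_def, hval1, hval1]; exact Fin.lt_def.mp hxy))
        (fun x y hxy => hc (by rw [Fin.lt_def, hval1, hval1]; exact Fin.lt_def.mp hxy))
    · exact IH b (by omega) (fun s => r (e (Fin.natAdd a s))) (fun t => c (e (Fin.natAdd a t)))
        (fun x y hxy => hr (by rw [Fin.lt_def, hval2, hval2]
                               exact Nat.add_lt_add_left (Fin.lt_def.mp hxy) a))
        (fun x y hxy => hc (by rw [Fin.lt_def, hval2, hval2]
                               exact Nat.add_lt_add_left (Fin.lt_def.mp hxy) a))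
  push_neg at hC hD
  -- contiguous case
  set z : Fin k := ⟨0, hk0⟩ with hzdef
  have step : ∀ p q : Fin k, (q:ℕ) + 1 = (p:ℕ) → r p = r q + 1 ∧ c p = c q + 1 := by
    intro p q hpq
    have h1 : r q < r p := hr (Fin.lt_def.mpr (by omega))
    have h2 : c q < c p := hc (Fin.lt_def.mpr (by omega))
    have h3 : r p < c q + 2 := hC p q hpq
    have h4 : c p < r q + 2 := hD p q hpq
    omega
  have hall : ∀ v : ℕ, ∀ hv : v < k, r ⟨v, hv⟩ = r z + v ∧ c ⟨v, hv⟩ = c z + v := by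
    intro v
    induction v with
    | zero =>
        intro hv
        have : (⟨0, hv⟩ : Fin k) = z := rfl
        rw [this]
        omega
    | succ v ihv =>
        intro hv
        have hv' : v < k := by omega
        obtain ⟨h1, h2⟩ := ihv hv'
        obtain ⟨h3, h4⟩ := step ⟨v+1, hv⟩ ⟨v, hv'⟩ rfl
        constructor <;> omega
  have hallF : ∀ s : Fin k, r s = r z + (s:ℕ) ∧ c s = c z + (s:ℕ) := by
    intro s
    have := hall (s:ℕ) s.isLt
    rwa [Fin.eta] at this
  have hA0 : r z < c z + 2 := hA z
  have hB0 : c z < r z + 2 := hB z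
  rcases (by omega : r z = c z ∨ r z = c z + 1 ∨ c z = r z + 1) with heq | heq | heq
  · -- principal contiguous block
    have hmat : (Matrix.of fun s t : Fin k => Tm (r s) (c t)) = Bk (r z) k := by
      funext s t
      show Tm (r s) (c t) = Tm (r z + (s:ℕ)) (r z + (t:ℕ))
      rw [(hallF s).1, (hallF t).2, heq]
    rw [hmat]
    exact qnn_detBk (r z) k
  · -- rows = cols + 1 : "upper triangular" (zero below diagonal)
    have htri : (Matrix.of fun s t : Fin k => Tm (r s) (c t)).BlockTriangular id := by
      intro i j hij
      show Tm (r i) (c j) = 0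
      have h1 := (hallF i).1
      have h2 := (hallF j).2
      have hij' : (j:ℕ) < (i:ℕ) := hij
      exact Tm_lower_zero (by omega)
    rw [Matrix.det_of_upperTriangular htri]
    apply qnn_prod
    intro i _
    show qnn (Tm (r i) (c i))
    exact qnn_Tm _ _
  · -- cols = rows + 1 : "lower triangular"
    have htri : (Matrix.of fun s t : Fin k => Tm (r s) (c t)).BlockTriangular OrderDual.toDual := by
      intro i j hij
      show Tm (r i) (c j) = 0
      have h1 := (hallF i).1
      have h2 := (hallF j).2
      have hij' : (i:ℕ) < (j:ℕ) := hij
      exact Tm_upper_zero (by omega)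
    rw [Matrix.det_of_lowerTriangular _ htri]
    apply qnn_prod
    intro i _
    show qnn (Tm (r i) (c i))
    exact qnn_Tm _ _

end Ttn
section Mtn

open Matrix Finset

open scoped Classical in
lemma Mtn_rows_pos (n : ℕ)
    (IH : ∀ k : ℕ, ∀ r c : Fin k → ℕ, StrictMono r → StrictMono c → (∀ s, r s ≤ n) →
      qnn (Matrix.det (Matrix.of fun s t : Fin k => Mm (r s) (c t))))
    (k : ℕ) (r c : Fin k → ℕ) (hr : StrictMono r) (hc : StrictMono c)
    (hpos : ∀ s, 1 ≤ r s) (hbound : ∀ s, r s ≤ n + 1) :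
    qnn (Matrix.det (Matrix.of fun s t : Fin k => Mm (r s) (c t))) := by
  set N := n + 2 with hN
  have hentry : ∀ (s t : Fin k),
      Mm (r s) (c t) = ∑ u : Fin N, Mm (r s - 1) (u:ℕ) * Tm (u:ℕ) (c t) := by
    intro s t
    have h1 : r s - 1 + 1 = r s := by have := hpos s; omega
    calc Mm (r s) (c t) = Mm ((r s - 1) + 1) (c t) := by rw [h1]
      _ = ∑ u ∈ Finset.range N, Mm (r s - 1) u * Tm u (c t) :=
          recMatrix _ _ N (by have := hbound s; omega)
      _ = ∑ u : Fin N, Mm (r s - 1) (u:ℕ) * Tm (u:ℕ) (c t) :=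
          (Fin.sum_univ_eq_sum_range _ N).symm
  have hmat : (Matrix.of fun s t : Fin k => Mm (r s) (c t))
      = (Matrix.of fun s t : Fin k =>
          ∑ u : Fin N, (fun (s : Fin k) (u : Fin N) => Mm (r s - 1) (u:ℕ)) s u
            * (fun (u : Fin N) (t : Fin k) => Tm (u:ℕ) (c t)) u t) := by
    funext s t
    exact hentry s t
  rw [hmat, cauchy_binet]
  apply qnn_sum
  intro g hg
  have hgm : StrictMono g := by simpa using (Finset.mem_filter.1 hg).2
  apply qnn_mul
  · exact IH k (fun s => r s - 1) (fun t => ((g t) : ℕ))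
      (fun x y hxy => by
        show r x - 1 < r y - 1
        have h1 := hr hxy; have h2 := hpos x; omega)
      (fun x y hxy => Fin.lt_def.mp (hgm hxy))
      (fun s => by show r s - 1 ≤ n; have := hbound s; omega)
  · exact Ttn k (fun s => ((g s) : ℕ)) c
      (fun x y hxy => Fin.lt_def.mp (hgm hxy)) hc

theorem Mtn_aux : ∀ n : ℕ, ∀ k : ℕ, ∀ r c : Fin k → ℕ, StrictMono r → StrictMono c →
    (∀ s, r s ≤ n) → qnn (Matrix.det (Matrix.of fun s t : Fin k => Mm (r s) (c t))) := by
  intro n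
  induction n with
  | zero =>
      intro k r c hr hc hb
      match k, r, c, hr, hc, hb with
      | 0, r, c, hr, hc, hb => rw [Matrix.det_fin_zero]; exact qnn_one
      | 1, r, c, hr, hc, hb => rw [Matrix.det_fin_one]; exact qnn_Mm _ _
      | (k2+2), r, c, hr, hc, hb =>
          exfalso
          have h1 : r ⟨0, by omega⟩ < r ⟨1, by omega⟩ := hr (by rw [Fin.lt_def]; norm_num)
          have h2 := hb ⟨0, by omega⟩
          have h3 := hb ⟨1, by omega⟩
          omega
  | succ n IHn =>
      intro k r c hr hc hb
      by_cases h0 : ∀ s, 1 ≤ r s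
      · exact Mtn_rows_pos n IHn k r c hr hc h0 hb
      · push_neg at h0
        obtain ⟨s0, hs0⟩ := h0
        match k, r, c, hr, hc, hb, s0, hs0 with
        | (m+1), r, c, hr, hc, hb, s0, hs0 =>
        have hr0 : r 0 = 0 := by
          have h1 : r 0 ≤ r s0 := hr.monotone (by rw [Fin.le_def]; simp)
          omega
        by_cases hc0 : c 0 = 0
        · -- expand along first row
          rw [Matrix.det_succ_row_zero, Fin.sum_univ_succ]
          have hz : (∑ j : Fin m, (-1:Polynomial ℝ)^(((j.succ : Fin (m+1))):ℕ)
              * (Matrix.of fun s t : Fin (m+1) => Mm (r s) (c t)) 0 j.succ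
              * ((Matrix.of fun s t : Fin (m+1) => Mm (r s) (c t)).submatrix
                  Fin.succ j.succ.succAbove).det) = 0 := by
            apply Finset.sum_eq_zero
            intro x _
            have hcx : 0 < c x.succ := by
              have : c 0 < c x.succ := hc (by rw [Fin.lt_def]; simp [Fin.val_succ])
              omega
            have hzz : (Matrix.of fun s t : Fin (m+1) => Mm (r s) (c t)) 0 x.succ = 0 := by
              show Mm (r 0) (c x.succ) = 0
              rw [hr0, Mm_zero, if_neg (by omega)]
            rw [hzz]
            ring
          rw [hz, add_zero]
          have he : (Matrix.of fun s t : Fin (m+1) => Mm (r s) (c t)) 0 0 = 1 := by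
            show Mm (r 0) (c 0) = 1
            rw [hr0, hc0, Mm_zero, if_pos rfl]
          rw [he]
          have hsub : ((Matrix.of fun s t : Fin (m+1) => Mm (r s) (c t)).submatrix
              Fin.succ ((0 : Fin (m+1)).succAbove))
              = (Matrix.of fun s t : Fin m => Mm (r s.succ) (c t.succ)) := by
            funext s t
            show Mm (r s.succ) (c ((0 : Fin (m+1)).succAbove t)) = Mm (r s.succ) (c t.succ)
            rw [Fin.succAbove_zero]
          rw [hsub]
          have hq : qnn ((Matrix.of fun s t : Fin m => Mm (r s.succ) (c t.succ)).det) := by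
            apply Mtn_rows_pos n IHn m (fun s => r s.succ) (fun t => c t.succ)
              (fun x y hxy => hr (by rw [Fin.lt_def]; simp [Fin.val_succ];
                                     exact Fin.lt_def.mp hxy))
              (fun x y hxy => hc (by rw [Fin.lt_def]; simp [Fin.val_succ];
                                     exact Fin.lt_def.mp hxy))
              (fun s => by
                show 1 ≤ r s.succ
                have : r 0 < r s.succ := hr (by rw [Fin.lt_def]; simp [Fin.val_succ])
                omega)
              (fun s => hb s.succ)
          intro mm
          have h1 := hq mm
          simp only [Fin.val_zero, pow_zero, one_mul, mul_one]
          exact h1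
        · -- first row is zero
          have hz : (Matrix.of fun s t : Fin (m+1) => Mm (r s) (c t)).det = 0 := by
            apply Matrix.det_eq_zero_of_row_eq_zero 0
            intro t
            show Mm (r 0) (c t) = 0
            have hct : 0 < c t := by
              have h1 : c 0 ≤ c t := hc.monotone (by rw [Fin.le_def]; simp)
              omega
            rw [hr0, Mm_zero, if_neg (by omega)]
          rw [hz]
          exact qnn_zero

theorem Mtn (k : ℕ) (r c : Fin k → ℕ) (hr : StrictMono r) (hc : StrictMono c) :
    qnn (Matrix.det (Matrix.of fun s t : Fin k => Mm (r s) (c t))) := by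
  match k, r, c, hr, hc with
  | 0, r, c, hr, hc => rw [Matrix.det_fin_zero]; exact qnn_one
  | (m+1), r, c, hr, hc =>
      exact Mtn_aux (r ⟨m, by omega⟩) (m+1) r c hr hc
        (fun s => hr.monotone (by rw [Fin.le_def]; exact Nat.le_of_lt_succ s.isLt))

end Mtn

section Final

open Matrix Finset

/-- Every minor of the Hankel matrix `H = (W_{i+j}(q))_{i,j ≥ 0}` of type `B`
Narayana polynomials has nonnegative coefficients. -/
theorem hankel_narayanaB_q_totally_positive
    (k : ℕ) (hk : 1 ≤ k)
    (i j : Fin k → ℕ) (hi : StrictMono i) (hj : StrictMono j) (m : ℕ) :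
    0 ≤ (Matrix.det (Matrix.of fun s t : Fin k => narayanaB (i s + j t))).coeff m := by
  classical
  set N := i ⟨k-1, by omega⟩ + 1 with hNdef
  have hiN : ∀ s : Fin k, i s + 1 ≤ N := by
    intro s
    have h1 : i s ≤ i ⟨k-1, by omega⟩ := by
      apply hi.monotone
      rw [Fin.le_def]
      have := s.isLt
      simp only []
      omega
    omega
  have hentry : ∀ s t : Fin k, narayanaB (i s + j t)
      = ∑ u : Fin N, (Mm (i s) (u:ℕ) * dm (u:ℕ)) * Mm (j t) (u:ℕ) := by
    intro s t
    rw [keyId (i s) (j t) N (hiN s)]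
    rw [← Fin.sum_univ_eq_sum_range (fun u => dm u * Mm (i s) u * Mm (j t) u) N]
    exact Finset.sum_congr rfl (fun u _ => by ring)
  have hmat : (Matrix.of fun s t : Fin k => narayanaB (i s + j t))
      = (Matrix.of fun s t : Fin k => ∑ u : Fin N,
          (fun (s : Fin k) (u : Fin N) => Mm (i s) (u:ℕ) * dm (u:ℕ)) s u
            * (fun (u : Fin N) (t : Fin k) => Mm (j t) (u:ℕ)) u t) := by
    funext s t
    exact hentry s t
  rw [hmat, cauchy_binet]
  refine qnn_sum _ _ ?_ m
  intro g hg
  have hgm : StrictMono g := by simpa using (Finset.mem_filter.1 hg).2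
  apply qnn_mul
  · have e1 : (Matrix.of fun s t : Fin k => Mm (i s) ((g t):ℕ) * dm ((g t):ℕ))
        = (Matrix.of fun s t : Fin k => (fun t : Fin k => dm ((g t):ℕ)) t
            * (Matrix.of fun s t : Fin k => Mm (i s) ((g t):ℕ)) s t) := by
      funext s t
      exact mul_comm _ _
    rw [e1, Matrix.det_mul_row]
    exact qnn_mul (qnn_prod _ _ (fun t _ => qnn_dm _))
      (Mtn k (fun s => i s) (fun t => ((g t):ℕ)) hi
        (fun x y hxy => Fin.lt_def.mp (hgm hxy)))
  · have e2 : (Matrix.of fun s t : Fin k => Mm (j t) ((g s):ℕ))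
        = (Matrix.of fun s t : Fin k => Mm (j s) ((g t):ℕ)).transpose := rfl
    rw [e2, Matrix.det_transpose]
    exact Mtn k (fun s => j s) (fun t => ((g t):ℕ)) hj
      (fun x y hxy => Fin.lt_def.mp (hgm hxy))


end Final
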